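/- For all integers d ≥ 1 and k ≥ 3, the condition number of the graph H_{d,k} satisfies χ(H_{d,k}) ≤ 6·d·(2d−1)·k^{d+1}. -/

import Mathlib

open Matrix

attribute [local instance] Classical.propDecidable

/-- Vertex type of the graph `H_{d+1,k}` of the paper (the index is shifted by one:
`HVertex 0 k` is the vertex set of `H_{1,k}`, a path on `k` vertices). -/
def HVertex : ℕ → ℕ → Type
  | 0, k => Fin k
  | d + 1, k => Fin k ⊕ (Fin k × HVertex d k)

instance HVertex.fintype : (d k : ℕ) → Fintype (HVertex d k)
  | 0, k => inferInstanceAs (Fintype (Fin k))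
  | d + 1, k =>
    letI := HVertex.fintype d k
    inferInstanceAs (Fintype (Fin k ⊕ (Fin k × HVertex d k)))

/-- The designated root of `H_{d+1,k}`: an endpoint of the topmost path. -/
def HRoot (d k : ℕ) [NeZero k] : HVertex d k :=
  match d with
  | 0 => (0 : Fin k)
  | _ + 1 => Sum.inl (0 : Fin k)

/-- Adjacency of `H_{d+1,k}`: `HVertex 0 k` carries the path graph on `k` vertices;
`H_{d+2,k}` is a path on `k` vertices together with, for each path vertex `i`, an edge
from `i` to the root of the `i`-th fresh copy of `H_{d+1,k}`. -/
def HAdj (k : ℕ) [NeZero k] : (d : ℕ) → HVertex d k → HVertex d k → Prop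
  | 0 => fun u v => (SimpleGraph.pathGraph k).Adj u v
  | d + 1 => fun u v =>
      match u, v with
      | Sum.inl i, Sum.inl j => (SimpleGraph.pathGraph k).Adj i j
      | Sum.inl i, Sum.inr p => i = p.1 ∧ p.2 = HRoot d k
      | Sum.inr p, Sum.inl i => p.1 = i ∧ p.2 = HRoot d k
      | Sum.inr p, Sum.inr q => p.1 = q.1 ∧ HAdj k d p.2 q.2

theorem HAdj.symm' (k : ℕ) [NeZero k] :
    ∀ (d : ℕ) (u v : HVertex d k), HAdj k d u v → HAdj k d v u := by
  intro d
  induction d with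
  | zero => exact fun u v h => (SimpleGraph.pathGraph k).adj_symm h
  | succ d ih =>
    intro u v h
    match u, v with
    | Sum.inl i, Sum.inl j => exact (SimpleGraph.pathGraph k).adj_symm h
    | Sum.inl i, Sum.inr p => exact ⟨h.1.symm, h.2⟩
    | Sum.inr p, Sum.inl i => exact ⟨h.1.symm, h.2⟩
    | Sum.inr p, Sum.inr q => exact ⟨h.1.symm, ih p.2 q.2 h.2⟩

theorem HAdj.irrefl' (k : ℕ) [NeZero k] :
    ∀ (d : ℕ) (u : HVertex d k), ¬HAdj k d u u := by
  intro d
  induction d with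
  | zero => exact fun u h => (SimpleGraph.pathGraph k).irrefl h
  | succ d ih =>
    intro u h
    match u with
    | Sum.inl i => exact (SimpleGraph.pathGraph k).irrefl h
    | Sum.inr p => exact ih p.2 h.2

/-- The graph `H_{d+1,k}` of the paper (index shifted by one: `HGraph k 0 = H_{1,k}`). -/
def HGraph (k : ℕ) [NeZero k] (d : ℕ) : SimpleGraph (HVertex d k) where
  Adj := HAdj k d
  symm := ⟨fun u v h => HAdj.symm' k d u v h⟩
  loopless := ⟨fun u h => HAdj.irrefl' k d u h⟩

/-- `lam` is the largest eigenvalue of the symmetric positive semidefinite matrix `M`,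
characterized through the Rayleigh quotient. -/
def IsMaxEigenvalue {V : Type*} [Fintype V] (M : Matrix V V ℝ) (lam : ℝ) : Prop :=
  (∀ v : V → ℝ, v ⬝ᵥ (M *ᵥ v) ≤ lam * (v ⬝ᵥ v)) ∧
  ∃ v : V → ℝ, v ⬝ᵥ v = 1 ∧ v ⬝ᵥ (M *ᵥ v) = lam

/-- `lam` is the smallest nonzero eigenvalue of the Laplacian matrix `M` of a connected
graph (whose kernel consists of the constant vectors), characterized through the Rayleigh
quotient on the orthogonal complement `{v : ∑ᵢ vᵢ = 0}` of the kernel. -/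
def IsMinPosEigenvalue {V : Type*} [Fintype V] (M : Matrix V V ℝ) (lam : ℝ) : Prop :=
  (∀ v : V → ℝ, (∑ i, v i) = 0 → lam * (v ⬝ᵥ v) ≤ v ⬝ᵥ (M *ᵥ v)) ∧
  ∃ v : V → ℝ, (∑ i, v i) = 0 ∧ v ⬝ᵥ v = 1 ∧ v ⬝ᵥ (M *ᵥ v) = lam


open Finset

noncomputable def esq {V : Type*} (v : V → ℝ) : Sym2 V → ℝ :=
  Sym2.lift ⟨fun a b => (v a - v b)^2, fun a b => by ring⟩

@[simp] lemma esq_mk {V : Type*} (v : V → ℝ) (a b : V) : esq v s(a,b) = (v a - v b)^2 := rfl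

lemma esq_nonneg {V : Type*} (v : V → ℝ) (e : Sym2 V) : 0 ≤ esq v e := by
  induction e with
  | _ a b => exact sq_nonneg _

section G
variable {V : Type*} [Fintype V] (G : SimpleGraph V) (v : V → ℝ)

/-- key Cauchy-Schwarz along a walk -/
lemma sq_sub_le_walk : ∀ {a b : V} (w : G.Walk a b),
    (v a - v b)^2 ≤ w.length * (w.edges.map (esq v)).sum := by
  intro a b w
  induction w with
  | nil => simp
  | @cons a c b h p ih =>
    simp only [SimpleGraph.Walk.edges_cons, SimpleGraph.Walk.length_cons, List.map_cons,
      List.sum_cons, esq_mk]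
    push_cast
    have hS : (0:ℝ) ≤ (p.edges.map (esq v)).sum := by
      apply List.sum_nonneg
      intro x hx
      obtain ⟨e, _, rfl⟩ := List.mem_map.mp hx
      exact esq_nonneg v e
    set n : ℝ := (p.length : ℝ) with hn
    have hn0 : (0:ℝ) ≤ n := by positivity
    set x := v a - v c
    set y := v c - v b
    set S := (p.edges.map (esq v)).sum
    have hy : y^2 ≤ n * S := ih
    have h1 : v a - v b = x + y := by ring
    rw [h1]
    rcases eq_or_lt_of_le hn0 with h0 | h0
    · have : y^2 ≤ 0 := by rw [← h0] at hy; linarith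
      have hy0 : y = 0 := by nlinarith [sq_nonneg y]
      rw [hy0]
      nlinarith
    · nlinarith [sq_nonneg (n*x - y), sq_nonneg (x+y)]

lemma trail_sum_le {a b : V} (w : G.Walk a b) (hw : w.IsTrail) :
    (w.edges.map (esq v)).sum ≤ ∑ e ∈ G.edgeFinset, esq v e := by
  rw [← List.sum_toFinset _ hw.edges_nodup]
  apply Finset.sum_le_sum_of_subset_of_nonneg
  · intro e he
    rw [SimpleGraph.mem_edgeFinset]
    exact w.edges_subset_edgeSet (List.mem_toFinset.mp he)
  · intro e _ _
    exact esq_nonneg v e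

lemma double_sum_eq_two_mul_edge_sum :
    ∑ i, ∑ j, (if G.Adj i j then (v i - v j)^2 else 0)
      = 2 * ∑ e ∈ G.edgeFinset, esq v e := by
  classical
  have h1 : ∑ i, ∑ j, (if G.Adj i j then (v i - v j)^2 else 0)
      = ∑ p ∈ (univ ×ˢ univ).filter (fun p : V × V => G.Adj p.1 p.2), (v p.1 - v p.2)^2 := by
    rw [Finset.sum_filter, Finset.sum_product]
  have h2 : ∑ p ∈ (univ ×ˢ univ).filter (fun p : V × V => G.Adj p.1 p.2), (v p.1 - v p.2)^2
      = ∑ d : G.Dart, esq v d.edge := by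
    refine (Finset.sum_bij' (fun d _ => (d.fst, d.snd))
      (fun p hp => ⟨p, (Finset.mem_filter.mp hp).2⟩) ?_ ?_ ?_ ?_ ?_).symm
    · intro d _
      simp [d.adj]
    · intro p hp
      exact Finset.mem_univ _
    · intro d _
      rfl
    · intro p hp
      rfl
    · intro d _
      rfl
  have h3 : ∑ d : G.Dart, esq v d.edge = ∑ e ∈ G.edgeFinset, 2 * esq v e := by
    have hmaps : ∀ d : G.Dart, d ∈ (univ : Finset G.Dart) → d.edge ∈ G.edgeFinset := by
      intro d _
      rw [SimpleGraph.mem_edgeFinset]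
      exact d.edge_mem
    rw [← Finset.sum_fiberwise_of_maps_to hmaps (fun d : G.Dart => esq v d.edge)]
    refine Finset.sum_congr rfl fun e he => ?_
    have : ∀ d ∈ Finset.filter (fun d : G.Dart => d.edge = e) univ, esq v d.edge = esq v e := by
      intro d hd
      rw [(Finset.mem_filter.mp hd).2]
    rw [Finset.sum_congr rfl this, Finset.sum_const, nsmul_eq_mul]
    congr 1
    have h2 := G.dart_edge_fiber_card e (SimpleGraph.mem_edgeFinset.mp he)
    exact_mod_cast h2
  rw [h1, h2, h3, Finset.mul_sum]

section G
variable {V : Type*} [Fintype V] (G : SimpleGraph V) (v : V → ℝ)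

lemma quad_eq : v ⬝ᵥ (G.lapMatrix ℝ *ᵥ v)
    = (∑ i, ∑ j, if G.Adj i j then (v i - v j)^2 else 0) / 2 := by
  rw [← Matrix.toLinearMap₂'_apply', SimpleGraph.lapMatrix_toLinearMap₂']

lemma dsum_nonneg : 0 ≤ ∑ i, ∑ j, (if G.Adj i j then (v i - v j)^2 else 0) := by
  apply Finset.sum_nonneg; intro i _
  apply Finset.sum_nonneg; intro j _
  split <;> positivity

lemma filter_card_sum : ∀ (i : V) (c : ℝ), 0 ≤ c →
    ∑ j, (if G.Adj i j then c else 0) = ((univ.filter (G.Adj i)).card : ℝ) * c := by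
  intro i c _
  rw [← Finset.sum_filter, Finset.sum_const, nsmul_eq_mul]

lemma dsum_le_of_deg (hdeg : ∀ i : V, (univ.filter (G.Adj i)).card ≤ 3) :
    ∑ i, ∑ j, (if G.Adj i j then (v i - v j)^2 else 0) ≤ 12 * (v ⬝ᵥ v) := by
  have hvv : v ⬝ᵥ v = ∑ i, (v i)^2 := by
    simp [dotProduct, sq]
  have hd : ∀ i : V, ((univ.filter (G.Adj i)).card : ℝ) ≤ 3 := by
    intro i; exact_mod_cast hdeg i
  have step1 : ∑ i, ∑ j, (if G.Adj i j then (v i - v j)^2 else 0)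
      ≤ ∑ i, ∑ j, (if G.Adj i j then 2*(v i)^2 + 2*(v j)^2 else 0) := by
    apply Finset.sum_le_sum; intro i _
    apply Finset.sum_le_sum; intro j _
    split
    · nlinarith [sq_nonneg (v i + v j)]
    · exact le_refl _
  have split2 : ∑ i, ∑ j, (if G.Adj i j then 2*(v i)^2 + 2*(v j)^2 else 0)
      = (∑ i, ∑ j, (if G.Adj i j then 2*(v i)^2 else 0))
        + ∑ i, ∑ j, (if G.Adj i j then 2*(v j)^2 else 0) := by
    rw [← Finset.sum_add_distrib]
    refine Finset.sum_congr rfl fun i _ => ?_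
    rw [← Finset.sum_add_distrib]
    refine Finset.sum_congr rfl fun j _ => ?_
    split <;> ring
  have part1 : ∑ i, ∑ j, (if G.Adj i j then 2*(v i)^2 else 0) ≤ 6 * ∑ i, (v i)^2 := by
    have : ∀ i : V, i ∈ univ → ∑ j, (if G.Adj i j then 2*(v i)^2 else 0) ≤ 6 * (v i)^2 := by
      intro i _
      rw [filter_card_sum G i (2*(v i)^2) (by positivity)]
      nlinarith [hd i, sq_nonneg (v i)]
    calc ∑ i, ∑ j, (if G.Adj i j then 2*(v i)^2 else 0) ≤ ∑ i, 6 * (v i)^2 :=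
          Finset.sum_le_sum this
      _ = 6 * ∑ i, (v i)^2 := by rw [Finset.mul_sum]
  have part2 : ∑ i, ∑ j, (if G.Adj i j then 2*(v j)^2 else 0) ≤ 6 * ∑ i, (v i)^2 := by
    rw [Finset.sum_comm]
    have : ∀ j : V, j ∈ univ → ∑ i, (if G.Adj i j then 2*(v j)^2 else 0) ≤ 6 * (v j)^2 := by
      intro j _
      have hcomm : ∀ i : V, (if G.Adj i j then 2*(v j)^2 else 0) = (if G.Adj j i then 2*(v j)^2 else 0) := by
        intro i; simp [G.adj_comm]
      rw [Finset.sum_congr rfl (fun i _ => hcomm i),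
        filter_card_sum G j (2*(v j)^2) (by positivity)]
      nlinarith [hd j, sq_nonneg (v j)]
    calc ∑ j, ∑ i, (if G.Adj i j then 2*(v j)^2 else 0) ≤ ∑ j, 6 * (v j)^2 :=
          Finset.sum_le_sum this
      _ = 6 * ∑ j, (v j)^2 := by rw [Finset.mul_sum]
  rw [hvv]
  linarith

lemma avg_eq (hsum : ∑ i, v i = 0) :
    ∑ i, ∑ j, (v i - v j)^2 = 2 * (Fintype.card V : ℝ) * ∑ i, (v i)^2 := by
  have expand : ∀ i : V, ∑ j, (v i - v j)^2
      = (Fintype.card V : ℝ) * (v i)^2 - 2 * v i * (∑ j, v j) + ∑ j, (v j)^2 := by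
    intro i
    have : ∀ j : V, (v i - v j)^2 = (v i)^2 - 2 * v i * v j + (v j)^2 := fun j => by ring
    rw [Finset.sum_congr rfl (fun j _ => this j)]
    rw [Finset.sum_add_distrib, Finset.sum_sub_distrib, Finset.sum_const, ← Finset.mul_sum]
    simp [Finset.card_univ, nsmul_eq_mul]
  rw [Finset.sum_congr rfl (fun i _ => expand i)]
  rw [Finset.sum_add_distrib, Finset.sum_sub_distrib, ← Finset.mul_sum, Finset.sum_const,
    Finset.card_univ, nsmul_eq_mul]
  have : ∑ i : V, 2 * v i * (∑ j, v j) = 0 := by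
    rw [hsum]; simp
  rw [hsum]
  simp
  ring


lemma esq_list_nonneg {V : Type*} [Fintype V] (G : SimpleGraph V) (v : V → ℝ) {a b : V}
    (w : G.Walk a b) : 0 ≤ (w.edges.map (esq v)).sum := by
  apply List.sum_nonneg
  intro x hx
  obtain ⟨e, _, rfl⟩ := List.mem_map.mp hx
  exact esq_nonneg v e
lemma main_bound (D : ℕ) (hD : 0 < D) (hcard : 0 < Fintype.card V)
    (hdeg : ∀ i : V, (univ.filter (G.Adj i)).card ≤ 3)
    (hwalk : ∀ a b : V, ∃ w : G.Walk a b, w.IsTrail ∧ w.length ≤ D)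
    {lammax lammin : ℝ}
    (hmax : ∃ v : V → ℝ, v ⬝ᵥ v = 1 ∧ v ⬝ᵥ (G.lapMatrix ℝ *ᵥ v) = lammax)
    (hmin : ∃ v : V → ℝ, (∑ i, v i) = 0 ∧ v ⬝ᵥ v = 1 ∧ v ⬝ᵥ (G.lapMatrix ℝ *ᵥ v) = lammin) :
    lammax / lammin ≤ 3 * (Fintype.card V : ℝ) * D := by
  set n : ℝ := (Fintype.card V : ℝ) with hn
  have hn0 : (0:ℝ) < n := by rw [hn]; exact_mod_cast hcard
  have hD0 : (0:ℝ) < (D:ℝ) := by exact_mod_cast hD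
  -- lammax bounds
  obtain ⟨u, hu1, hu2⟩ := hmax
  have hmax6 : lammax ≤ 6 := by
    rw [← hu2, quad_eq G u]
    have := dsum_le_of_deg G u hdeg
    rw [hu1] at this
    linarith
  have hmax0 : 0 ≤ lammax := by
    rw [← hu2, quad_eq G u]
    have := dsum_nonneg G u
    linarith
  -- lammin lower bound
  obtain ⟨w, hw0, hw1, hw2⟩ := hmin
  have hQ : lammin = (∑ i, ∑ j, if G.Adj i j then (w i - w j)^2 else 0) / 2 := by
    rw [← hw2, quad_eq G w]
  set Q : ℝ := ∑ i, ∑ j, (if G.Adj i j then (w i - w j)^2 else 0) with hQdef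
  have hQ0 : 0 ≤ Q := dsum_nonneg G w
  -- per-pair bound
  have pair : ∀ a b : V, (w a - w b)^2 ≤ (D : ℝ) * (Q / 2) := by
    intro a b
    obtain ⟨p, hp, hlen⟩ := hwalk a b
    have h1 := sq_sub_le_walk G w p
    have h2 := trail_sum_le G w p hp
    have h3 : ∑ e ∈ G.edgeFinset, esq w e = Q / 2 := by
      have := double_sum_eq_two_mul_edge_sum G w
      rw [← hQdef] at this
      linarith
    have h4 : (0:ℝ) ≤ (p.edges.map (esq w)).sum := esq_list_nonneg G w p
    have h5 : (p.length : ℝ) ≤ (D : ℝ) := by exact_mod_cast hlen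
    calc (w a - w b)^2 ≤ (p.length : ℝ) * (p.edges.map (esq w)).sum := h1
      _ ≤ (D : ℝ) * (Q / 2) := by
          rw [← h3]
          apply mul_le_mul h5 h2 h4 (le_of_lt hD0)
  -- sum the pair bound
  have havg : 2 * n * 1 = ∑ i, ∑ j, (w i - w j)^2 := by
    have h := avg_eq w hw0
    have : ∑ i, (w i)^2 = 1 := by
      rw [← hw1]; simp [dotProduct, sq]
    rw [this] at h
    linarith [h]
  have hsum_pairs : ∑ i, ∑ j : V, (w i - w j)^2 ≤ n * n * ((D:ℝ) * (Q/2)) := by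
    calc ∑ i, ∑ j : V, (w i - w j)^2 ≤ ∑ _i : V, ∑ _j : V, (D:ℝ) * (Q/2) := by
          apply Finset.sum_le_sum; intro i _
          apply Finset.sum_le_sum; intro j _
          exact pair i j
      _ = n * n * ((D:ℝ) * (Q/2)) := by
          simp [Finset.sum_const, Finset.card_univ, hn]
          ring
  have hminlb : 2 / (n * (D:ℝ)) ≤ lammin := by
    rw [hQ]
    rw [div_le_iff₀ (by positivity)]
    have h6 : 2 * n ≤ n * n * ((D:ℝ) * (Q/2)) := by
      calc 2 * n = 2 * n * 1 := by ring
        _ = ∑ i, ∑ j : V, (w i - w j)^2 := havg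
        _ ≤ n * n * ((D:ℝ) * (Q/2)) := hsum_pairs
    -- goal: 2 ≤ Q / 2 * (n * D)
    nlinarith [h6, hn0, hD0, hQ0]
  have hminpos : 0 < lammin := lt_of_lt_of_le (by positivity) hminlb
  calc lammax / lammin ≤ 6 / (2 / (n * (D:ℝ))) := by
        apply div_le_div₀ (by norm_num) hmax6 (by positivity) hminlb
    _ = 3 * n * (D:ℝ) := by
        field_simp
        ring


open Finset

-- === degree bounds ===
lemma pathdeg_le {k : ℕ} (i : Fin k) :
    (univ.filter ((SimpleGraph.pathGraph k).Adj i)).card ≤ 2 := by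
  have hmaps : ∀ j ∈ univ.filter ((SimpleGraph.pathGraph k).Adj i),
      (decide (i.val + 1 = j.val)) ∈ (univ : Finset Bool) := fun _ _ => mem_univ _
  refine le_trans (Finset.card_le_card_of_injOn _ hmaps ?_) (by simp)
  intro a ha b hb hab
  simp only [coe_filter, Set.mem_setOf_eq, SimpleGraph.pathGraph_adj] at ha hb
  have hab' : (i.val + 1 = a.val) ↔ (i.val + 1 = b.val) := decide_eq_decide.mp hab
  apply Fin.ext
  rcases ha.2 with h1 | h1 <;> rcases hb.2 with h2 | h2 <;> omega

lemma pathdeg_zero_le {k : ℕ} [NeZero k] :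
    (univ.filter ((SimpleGraph.pathGraph k).Adj 0)).card ≤ 1 := by
  apply Finset.card_le_one.mpr
  intro a ha b hb
  simp only [mem_filter, SimpleGraph.pathGraph_adj] at ha hb
  apply Fin.ext
  have h0 : (0 : Fin k).val = 0 := rfl
  rcases ha.2 with h1 | h1 <;> rcases hb.2 with h2 | h2 <;> omega

set_option maxHeartbeats 1000000 in
lemma hdeg_le (k : ℕ) [NeZero k] : ∀ d : ℕ,
    (∀ u : HVertex d k, (univ.filter (HAdj k d u)).card ≤ 3)
    ∧ (univ.filter (HAdj k d (HRoot d k))).card ≤ 2 := by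
  intro d
  induction d with
  | zero =>
    constructor
    · intro u
      exact le_trans (pathdeg_le u) (by norm_num)
    · exact le_trans (pathdeg_zero_le (k := k)) (by norm_num)
  | succ d ih =>
    have hinl : ∀ i : Fin k,
        (univ.filter (HAdj k (d+1) (Sum.inl i : HVertex (d+1) k))).card ≤
          1 + (univ.filter ((SimpleGraph.pathGraph k).Adj i)).card := by
      intro i
      set t : Finset (Option (Fin k)) :=
        insert none ((univ.filter ((SimpleGraph.pathGraph k).Adj i)).image some) with ht
      have hmaps : ∀ w ∈ univ.filter (HAdj k (d+1) (Sum.inl i : HVertex (d+1) k)),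
          (match w with
           | Sum.inl j => some j
           | Sum.inr _ => none) ∈ t := by
        intro w hw
        rw [mem_filter] at hw
        match w with
        | Sum.inl j =>
          simp only [ht, mem_insert, mem_image]
          right
          exact ⟨j, mem_filter.mpr ⟨mem_univ _, hw.2⟩, rfl⟩
        | Sum.inr p => exact mem_insert_self _ _
      have hinj : Set.InjOn (fun w : HVertex (d+1) k => match w with
          | Sum.inl j => some j
          | Sum.inr _ => (none : Option (Fin k)))
          ((univ.filter (HAdj k (d+1) (Sum.inl i : HVertex (d+1) k))) : Set (HVertex (d+1) k)) := by
        intro a ha b hb hab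
        simp only [coe_filter, Set.mem_setOf_eq] at ha hb
        match a, b with
        | Sum.inl j1, Sum.inl j2 =>
          simp only [Option.some.injEq] at hab
          rw [hab]
        | Sum.inl j1, Sum.inr q => simp at hab
        | Sum.inr p, Sum.inl j2 => simp at hab
        | Sum.inr p, Sum.inr q =>
          obtain ⟨h1, h2⟩ := ha.2
          obtain ⟨h3, h4⟩ := hb.2
          have : p = q := Prod.ext (h1.symm.trans h3) (h2.trans h4.symm)
          rw [this]
      refine le_trans (Finset.card_le_card_of_injOn _ hmaps hinj) ?_
      refine le_trans (Finset.card_insert_le _ _) ?_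
      have := Finset.card_image_le (s := univ.filter ((SimpleGraph.pathGraph k).Adj i))
        (f := (some : Fin k → Option (Fin k)))
      omega
    constructor
    · intro u
      match u with
      | Sum.inl i => exact le_trans (hinl i) (by have := pathdeg_le i; omega)
      | Sum.inr ⟨i, x⟩ =>
        by_cases hx : x = HRoot d k
        · -- neighbors: inl i and inr (i, y) with y adj x
          set t : Finset (Option (HVertex d k)) :=
            insert none ((univ.filter (HAdj k d x)).image some) with ht
          have hmaps : ∀ w ∈ univ.filter (HAdj k (d+1) (Sum.inr (i, x) : HVertex (d+1) k)),
              (match w with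
               | Sum.inl j => none
               | Sum.inr q => some q.2) ∈ t := by
            intro w hw
            rw [mem_filter] at hw
            match w with
            | Sum.inl j => exact mem_insert_self _ _
            | Sum.inr q =>
              simp only [ht, mem_insert, mem_image]
              right
              exact ⟨q.2, mem_filter.mpr ⟨mem_univ _, hw.2.2⟩, rfl⟩
          have hinj : Set.InjOn (fun w : HVertex (d+1) k => match w with
              | Sum.inl j => (none : Option (HVertex d k))
              | Sum.inr q => some q.2)
              ((univ.filter (HAdj k (d+1) (Sum.inr (i, x) : HVertex (d+1) k))) : Set (HVertex (d+1) k)) := by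
            intro a ha b hb hab
            simp only [coe_filter, Set.mem_setOf_eq] at ha hb
            match a, b with
            | Sum.inl j1, Sum.inl j2 =>
              have h1 : (i, x).1 = j1 := ha.2.1
              have h2 : (i, x).1 = j2 := hb.2.1
              rw [← h1, ← h2]
            | Sum.inl j1, Sum.inr q => simp at hab
            | Sum.inr p, Sum.inl j2 => simp at hab
            | Sum.inr p, Sum.inr q =>
              simp only [Option.some.injEq] at hab
              have h1 : (i, x).1 = p.1 := ha.2.1
              have h2 : (i, x).1 = q.1 := hb.2.1
              have : p = q := Prod.ext (h1.symm.trans h2) hab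
              rw [this]
          refine le_trans (Finset.card_le_card_of_injOn _ hmaps hinj) ?_
          refine le_trans (Finset.card_insert_le _ _) ?_
          have h1 := Finset.card_image_le (s := univ.filter (HAdj k d x))
            (f := (some : HVertex d k → Option (HVertex d k)))
          have h2 : (univ.filter (HAdj k d x)).card ≤ 2 := by rw [hx]; exact ih.2
          omega
        · -- no inl neighbors
          have hmaps : ∀ w ∈ univ.filter (HAdj k (d+1) (Sum.inr (i, x) : HVertex (d+1) k)),
              (match w with
               | Sum.inl j => x
               | Sum.inr q => q.2) ∈ univ.filter (HAdj k d x) := by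
            intro w hw
            rw [mem_filter] at hw
            match w with
            | Sum.inl j => exact absurd hw.2.2 hx
            | Sum.inr q => exact mem_filter.mpr ⟨mem_univ _, hw.2.2⟩
          have hinj : Set.InjOn (fun w : HVertex (d+1) k => match w with
              | Sum.inl j => x
              | Sum.inr q => q.2)
              ((univ.filter (HAdj k (d+1) (Sum.inr (i, x) : HVertex (d+1) k))) : Set (HVertex (d+1) k)) := by
            intro a ha b hb hab
            simp only [coe_filter, Set.mem_setOf_eq] at ha hb
            match a, b with
            | Sum.inl j1, Sum.inl j2 => exact absurd ha.2.2 hx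
            | Sum.inl j1, Sum.inr q => exact absurd ha.2.2 hx
            | Sum.inr p, Sum.inl j2 => exact absurd hb.2.2 hx
            | Sum.inr p, Sum.inr q =>
              have h1 : (i, x).1 = p.1 := ha.2.1
              have h2 : (i, x).1 = q.1 := hb.2.1
              have : p = q := Prod.ext (h1.symm.trans h2) hab
              rw [this]
          exact le_trans (Finset.card_le_card_of_injOn _ hmaps hinj) (ih.1 x)
    · -- root degree ≤ 2 : root is Sum.inl 0
      have h := hinl 0
      have h2 := pathdeg_zero_le (k := k)
      exact le_trans h (by omega)

-- === walks ===
lemma path_walk_exists {V : Type*} (G : SimpleGraph V) {k : ℕ} (f : Fin k → V)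
    (hf : ∀ i j : Fin k, i.val + 1 = j.val → G.Adj (f j) (f i)) :
    ∀ (m : ℕ) (hm : m < k) (h0 : 0 < k),
      ∃ w : G.Walk (f ⟨m, hm⟩) (f ⟨0, h0⟩), w.length = m := by
  intro m
  induction m with
  | zero => intro hm h0; exact ⟨SimpleGraph.Walk.nil, rfl⟩
  | succ m ih =>
    intro hm h0
    obtain ⟨w, hw⟩ := ih (Nat.lt_of_succ_lt hm) h0
    exact ⟨SimpleGraph.Walk.cons (hf ⟨m, Nat.lt_of_succ_lt hm⟩ ⟨m+1, hm⟩ rfl) w,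
      by simp [hw]⟩

lemma toRoot_exists (k : ℕ) [NeZero k] : ∀ (d : ℕ) (u : HVertex d k),
    ∃ w : (HGraph k d).Walk u (HRoot d k), w.length + 1 ≤ (d+1) * k := by
  have h0 : 0 < k := Nat.pos_of_ne_zero (NeZero.ne k)
  intro d
  induction d with
  | zero =>
    intro u
    obtain ⟨w, hw⟩ := path_walk_exists (HGraph k 0) (fun i : Fin k => (i : HVertex 0 k))
      (fun i j hij => SimpleGraph.pathGraph_adj.mpr (Or.inr hij)) u.val u.isLt h0
    refine ⟨w.copy (Fin.eta u u.isLt) ?_, ?_⟩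
    · exact Fin.ext rfl
    · refine le_trans (le_of_eq (congrArg (· + 1) ((SimpleGraph.Walk.length_copy _ _ _).trans hw))) ?_
      have := u.isLt
      omega
  | succ d ih =>
    intro u
    have htop : ∀ i : Fin k, ∃ w : (HGraph k (d+1)).Walk (Sum.inl i : HVertex (d+1) k)
        (HRoot (d+1) k), w.length = i.val := by
      intro i
      obtain ⟨w, hw⟩ := path_walk_exists (HGraph k (d+1))
        (fun j : Fin k => (Sum.inl j : HVertex (d+1) k))
        (fun a b hab => SimpleGraph.pathGraph_adj.mpr (Or.inr hab)) i.val i.isLt h0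
      refine ⟨w.copy (by rw [Fin.eta]) ?_, (SimpleGraph.Walk.length_copy _ _ _).trans hw⟩
      show (Sum.inl (⟨0, h0⟩ : Fin k) : HVertex (d+1) k) = Sum.inl (0 : Fin k)
      congr 1
    match u with
    | Sum.inl i =>
      obtain ⟨w, hw⟩ := htop i
      refine ⟨w, ?_⟩
      have : i.val < k := i.isLt
      have hk1 : k ≤ (d+1+1) * k := Nat.le_mul_of_pos_left k (by omega)
      omega
    | Sum.inr ⟨i, x⟩ =>
      obtain ⟨w0, hw0⟩ := ih x
      let φ : HGraph k d →g HGraph k (d+1) :=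
        ⟨fun y => (Sum.inr (i, y) : HVertex (d+1) k), fun {a b} h => ⟨rfl, h⟩⟩
      have e : (HGraph k (d+1)).Adj (Sum.inr (i, HRoot d k)) (Sum.inl i) := ⟨rfl, rfl⟩
      obtain ⟨w2, hw2⟩ := htop i
      refine ⟨(w0.map φ).append (SimpleGraph.Walk.cons e w2), ?_⟩
      have hl : ((w0.map φ).append (SimpleGraph.Walk.cons e w2)).length = w0.length + (w2.length + 1) :=
        (SimpleGraph.Walk.length_append _ _).trans
          (congrArg₂ (· + ·) (SimpleGraph.Walk.length_map _ _) (SimpleGraph.Walk.length_cons _ _))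
      have : i.val < k := i.isLt
      have hk2 : (d+1+1) * k = (d+1) * k + k := by ring
      omega

lemma pair_trail_exists (k : ℕ) [NeZero k] (d : ℕ) (a b : HVertex d k) :
    ∃ w : (HGraph k d).Walk a b, w.IsTrail ∧ w.length ≤ 2 * ((d+1) * k - 1) := by
  obtain ⟨wa, hwa⟩ := toRoot_exists k d a
  obtain ⟨wb, hwb⟩ := toRoot_exists k d b
  refine ⟨(wa.append wb.reverse).bypass, ((wa.append wb.reverse).bypass_isPath).isTrail, ?_⟩
  have h1 := (wa.append wb.reverse).length_bypass_le
  rw [SimpleGraph.Walk.length_append, SimpleGraph.Walk.length_reverse] at h1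
  omega

-- === cardinality ===
lemma card_hvertex_succ (k d : ℕ) :
    Fintype.card (HVertex (d+1) k) = k + k * Fintype.card (HVertex d k) := by
  show Fintype.card (Fin k ⊕ (Fin k × HVertex d k)) = _
  rw [Fintype.card_sum, Fintype.card_prod, Fintype.card_fin]

lemma card_hvertex_zero (k : ℕ) : Fintype.card (HVertex 0 k) = k := Fintype.card_fin k

lemma card_hvertex_bound (k : ℕ) (hk : 3 ≤ k) : ∀ d : ℕ,
    2 * Fintype.card (HVertex d k) + 3 ≤ 3 * k^(d+1) := by
  intro d
  induction d with
  | zero => rw [card_hvertex_zero, pow_one]; omega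
  | succ d ih =>
    rw [card_hvertex_succ]
    have h1 : 2 * (k + k * Fintype.card (HVertex d k)) + 3 ≤ k * (2 * Fintype.card (HVertex d k) + 3) := by
      have e1 : 2 * (k + k * Fintype.card (HVertex d k)) + 3
          = k * (2 * Fintype.card (HVertex d k)) + (2*k+3) := by ring
      have e2 : k * (2 * Fintype.card (HVertex d k) + 3)
          = k * (2 * Fintype.card (HVertex d k)) + 3*k := by ring
      omega
    calc 2 * (k + k * Fintype.card (HVertex d k)) + 3
        ≤ k * (2 * Fintype.card (HVertex d k) + 3) := h1
      _ ≤ k * (3 * k^(d+1)) := Nat.mul_le_mul_left k ih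
      _ = 3 * k^(d+1+1) := by ring

/-- For all integers `d ≥ 1` and `k ≥ 3`, the condition number
`χ(H_{d,k}) = λ_max(L(H_{d,k}))/λ_min⁺(L(H_{d,k}))` satisfies
`χ(H_{d,k}) ≤ 6·d·(2d−1)·k^(d+1)`. -/
theorem hgraph_condition_number_bound (d k : ℕ) (hd : 1 ≤ d) (hk : 3 ≤ k) [NeZero k] :
    ∀ lammax lammin : ℝ,
      IsMaxEigenvalue ((HGraph k (d - 1)).lapMatrix ℝ) lammax →
      IsMinPosEigenvalue ((HGraph k (d - 1)).lapMatrix ℝ) lammin →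
      lammax / lammin ≤ 6 * (d : ℝ) * (2 * (d : ℝ) - 1) * (k : ℝ) ^ (d + 1) := by
  intro lammax lammin hmax hmin
  set δ := d - 1 with hdelta
  have hδ1 : δ + 1 = d := by omega
  have hcard : 0 < Fintype.card (HVertex δ k) := Fintype.card_pos_iff.mpr ⟨HRoot δ k⟩
  have hk3 : 3 ≤ (δ+1)*k := le_trans hk (Nat.le_mul_of_pos_left k (by omega))
  have hD : 0 < 2 * ((δ+1) * k - 1) := by omega
  have hdeg : ∀ i : HVertex δ k, (univ.filter ((HGraph k δ).Adj i)).card ≤ 3 :=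
    (hdeg_le k δ).1
  have key := main_bound (HGraph k δ) (2 * ((δ+1) * k - 1)) hD hcard hdeg
      (fun a b => pair_trail_exists k δ a b) hmax.2 hmin.2
  refine le_trans key ?_
  -- arithmetic
  have hnat : 3 * Fintype.card (HVertex δ k) * (2 * ((δ+1) * k - 1))
      ≤ 6 * d * (2*d - 1) * k^(d+1) := by
    rcases Nat.lt_or_ge d 2 with hd2 | hd2
    · -- d = 1
      have hd1 : d = 1 := by omega
      have hδ0 : δ = 0 := by omega
      rw [hδ0, hd1, card_hvertex_zero]
      have h2 : 2*((0+1)*k - 1) ≤ 2*k := by omega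
      calc 3*k*(2*((0+1)*k - 1)) ≤ 3*k*(2*k) := Nat.mul_le_mul_left _ h2
        _ = 6*k^2 := by ring
        _ ≤ 6*1*(2*1 - 1)*k^(1+1) := by norm_num
    · -- d ≥ 2
      have hcb := card_hvertex_bound k hk δ
      rw [hδ1] at hcb
      have h2 : 2*((δ+1)*k - 1) ≤ 2*(d*k) := by
        have : (δ+1)*k = d*k := by rw [hδ1]
        omega
      calc 3 * Fintype.card (HVertex δ k) * (2*((δ+1)*k - 1))
          ≤ 3 * Fintype.card (HVertex δ k) * (2*(d*k)) := Nat.mul_le_mul_left _ h2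
        _ = 3*(d*k)*(2 * Fintype.card (HVertex δ k)) := by ring
        _ ≤ 3*(d*k)*(3*k^d) := Nat.mul_le_mul_left _ (by omega)
        _ = (9*d)*k^(d+1) := by ring
        _ ≤ (6*d*(2*d - 1))*k^(d+1) := by
            apply Nat.mul_le_mul_right
            have h9 : 9 ≤ 6*(2*d - 1) := by omega
            calc 9*d ≤ (6*(2*d - 1))*d := Nat.mul_le_mul_right d h9
              _ = 6*d*(2*d - 1) := by ring
        _ = 6*d*(2*d - 1)*k^(d+1) := by ring
  have hcast : ((6 * d * (2*d - 1) * k^(d+1) : ℕ) : ℝ)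
      = 6 * (d : ℝ) * (2 * (d : ℝ) - 1) * (k : ℝ) ^ (d + 1) := by
    have h1 : (1:ℕ) ≤ 2*d := by omega
    push_cast [Nat.cast_sub h1]
    ring
  calc 3 * (Fintype.card (HVertex δ k) : ℝ) * ((2 * ((δ+1) * k - 1) : ℕ) : ℝ)
      = ((3 * Fintype.card (HVertex δ k) * (2 * ((δ+1) * k - 1)) : ℕ) : ℝ) := by push_cast; ring
    _ ≤ ((6 * d * (2*d - 1) * k^(d+1) : ℕ) : ℝ) := by exact_mod_cast hnat
    _ = 6 * (d : ℝ) * (2 * (d : ℝ) - 1) * (k : ℝ) ^ (d + 1) := hcast
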